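/- Let G be a digraph and let A ⊆ G₀ be a retract of the quasimetric space Q(G): there is a short map ρ : Q(G) → A (A carrying the quasimetric induced from Q(G)) with ρ(a) = a for all a ∈ A. Define the subdigraph H of G by H₀ = A and H₁ = {(h,h') ∈ A × A : d_G(h,h') ≤ 1}. Then ρ is a morphism of digraphs from G to H with ρ∘ι = id_H (so H is a retract of G), and the shortest-path quasimetric of H coincides with the quasimetric on A induced from Q(G); i.e., A with the induced quasimetric equals Q(H). -/

import Mathlib

open scoped ENNReal

/-- The shortest-path distance in `[0,∞]` determined by a relation `adj` on `V`:
the infimum of lengths of `adj`-chains from `x` to `y`. -/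
noncomputable def pathDist {V : Type*} (adj : V → V → Prop) (x y : V) : ℝ≥0∞ :=
  sInf {c : ℝ≥0∞ | ∃ l : List V, List.Chain adj x l ∧
    (x :: l).getLast (List.cons_ne_nil x l) = y ∧ c = l.length}

lemma pathDist_self {V : Type*} (adj : V → V → Prop) (x : V) : pathDist adj x x = 0 := by
  refine le_antisymm ?_ (zero_le)
  refine sInf_le ⟨[], List.Chain.nil, rfl, by simp⟩

lemma pathDist_le_one {V : Type*} {adj : V → V → Prop} {x y : V} (h : adj x y) :
    pathDist adj x y ≤ 1 := by
  refine sInf_le ⟨[y], List.Chain.cons h List.Chain.nil, by simp, by simp⟩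

lemma pathDist_cons {V : Type*} {adj : V → V → Prop} {x a : V} (z : V) (h : adj x a) :
    pathDist adj x z ≤ 1 + pathDist adj a z := by
  conv_rhs => rw [add_comm, pathDist, ENNReal.sInf_add]
  refine le_iInf₂ fun c hc => ?_
  obtain ⟨l, hch, hl, rfl⟩ := hc
  refine sInf_le ⟨a :: l, List.Chain.cons h hch, ?_, by push_cast [List.length_cons]; ring⟩
  simpa [List.getLast_cons] using hl

lemma pathDist_triangle {V : Type*} (adj : V → V → Prop) (x y z : V) :
    pathDist adj x z ≤ pathDist adj x y + pathDist adj y z := by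
  have aux : ∀ (l : List V) (x : V), List.Chain adj x l →
      (x :: l).getLast (List.cons_ne_nil x l) = y →
      pathDist adj x z ≤ l.length + pathDist adj y z := by
    intro l
    induction l with
    | nil => intro x _ hl; simp at hl; subst hl; simp
    | cons a t ih =>
      intro x hch hl
      obtain ⟨hxa, hch⟩ := List.isChain_cons_cons.mp hch
      have h1 := ih a hch (by simpa [List.getLast_cons] using hl)
      calc pathDist adj x z ≤ 1 + pathDist adj a z := pathDist_cons z hxa
        _ ≤ 1 + (↑t.length + pathDist adj y z) := by gcongr
        _ = ↑(a :: t).length + pathDist adj y z := by push_cast [List.length_cons]; ring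
  conv_rhs => rw [pathDist, ENNReal.sInf_add]
  refine le_iInf₂ fun c hc => ?_
  obtain ⟨l, hch, hl, rfl⟩ := hc
  exact aux l x hch hl

theorem stmt_11 {V : Type*} (adj : V → V → Prop) (hrefl : ∀ v, adj v v)
    (A : Set V) (ρ : V → A)
    (hshort : ∀ x y : V, pathDist adj ((ρ x : V)) ((ρ y : V)) ≤ pathDist adj x y)
    (hretr : ∀ a : A, ρ a.1 = a) :
    -- `ρ` is a morphism of digraphs from `G` to the subdigraph `H` with
    -- `H₀ = A` and `H₁ = {(h,h') : d_G(h,h') ≤ 1}` (and `ρ∘ι = id` holds by `hretr`):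
    (∀ x y : V, adj x y → pathDist adj ((ρ x : V)) ((ρ y : V)) ≤ 1) ∧
    -- the shortest-path quasimetric of `H` coincides with the quasimetric induced from `Q(G)`:
    (∀ h h' : A, pathDist (fun a b : A => pathDist adj a.1 b.1 ≤ 1) h h' =
      pathDist adj h.1 h'.1) := by
  have part1 : ∀ x y : V, adj x y → pathDist adj ((ρ x : V)) ((ρ y : V)) ≤ 1 :=
    fun x y h => (hshort x y).trans (pathDist_le_one h)
  refine ⟨part1, fun h h' => ?_⟩
  set adjH : A → A → Prop := fun a b : A => pathDist adj a.1 b.1 ≤ 1 with hadjH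
  refine le_antisymm ?_ ?_
  · -- pathDist_H ≤ pathDist adj on A
    refine le_sInf fun c hc => ?_
    obtain ⟨l, hch, hl, rfl⟩ := hc
    have hchain : List.Chain adjH (ρ h.1) (l.map ρ) :=
      List.isChain_cons_map_of_isChain_cons ρ (fun a b hab => part1 a b hab) hch
    rw [hretr h] at hchain
    refine sInf_le ⟨l.map ρ, hchain, ?_, by simp⟩
    have : (h :: l.map ρ) = (h.1 :: l).map ρ := by simp [hretr h]
    rw [show (h :: l.map ρ).getLast (List.cons_ne_nil _ _)
        = ((h.1 :: l).map ρ).getLast (by simp) by congr 1]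
    rw [List.getLast_map, hl, hretr h']
  · -- pathDist adj ≤ pathDist_H
    refine le_sInf fun c hc => ?_
    obtain ⟨l, hch, hl, rfl⟩ := hc
    clear hretr hshort
    induction l generalizing h with
    | nil =>
      simp at hl; subst hl; simp [pathDist_self]
    | cons a t ih =>
      obtain ⟨hha, hch⟩ := List.isChain_cons_cons.mp hch
      have h1 := ih a hch (by simpa [List.getLast_cons] using hl)
      calc pathDist adj h.1 h'.1
          ≤ pathDist adj h.1 a.1 + pathDist adj a.1 h'.1 := pathDist_triangle adj _ _ _
        _ ≤ 1 + ↑t.length := add_le_add hha h1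
        _ = ↑(a :: t).length := by push_cast [List.length_cons]; ring
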